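/- Fix an integer n ≥ 3 and p ∈ (0,1). Let θ* ∈ (0,1) be the unique zero of I_n(θ) = θ·log(1−θ) + n(θ + (1−θ)log(1−θ)) in (0,1), and set pˢ = h(θ*). Consider maximizing (1−k)θⁿ over pairs (k,θ) ∈ [0,1] × [0,1] satisfying k + (1−k)h(θ) = p. If p ≤ pˢ, the maximum is attained uniquely at k = 0 and θ = h⁻¹(p). If p > pˢ, the maximum is attained uniquely at θ = θ* and k = (p − pˢ)/(1 − pˢ), which is strictly positive. -/

import Mathlib

/-- `h(θ) = (1−θ)(1−log(1−θ))`, with `h 1 = 0` automatic since `Real.log 0 = 0`. -/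
noncomputable def h (θ : ℝ) : ℝ := (1 - θ) * (1 - Real.log (1 - θ))

/-- `I_n(θ) = θ·log(1−θ) + n(θ + (1−θ)·log(1−θ))`. -/
noncomputable def I (n : ℕ) (θ : ℝ) : ℝ :=
  θ * Real.log (1 - θ) + n * (θ + (1 - θ) * Real.log (1 - θ))

open Real Set

noncomputable def DD (θ : ℝ) : ℝ := θ + (1 - θ) * Real.log (1 - θ)

lemma h_eq (θ : ℝ) : h θ = 1 - DD θ := by unfold h DD; ring

lemma contDD : Continuous DD := by
  have h1 : Continuous fun x : ℝ => (1 - x) * Real.log (1 - x) :=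
    Real.continuous_mul_log.comp (continuous_const.sub continuous_id)
  exact continuous_id.add h1

lemma hasDerivAt_log1m {θ : ℝ} (h1 : θ < 1) :
    HasDerivAt (fun x => Real.log (1 - x)) (-(1 - θ)⁻¹) θ := by
  have h0 : (1:ℝ) - θ ≠ 0 := ne_of_gt (by linarith)
  have hsub : HasDerivAt (fun x : ℝ => 1 - x) (-1) θ := by
    simpa using (hasDerivAt_id θ).const_sub 1
  have := (Real.hasDerivAt_log h0).comp θ hsub
  exact this.congr_deriv (by simp)

lemma hasDerivAt_mullog {θ : ℝ} (h1 : θ < 1) :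
    HasDerivAt (fun x => (1 - x) * Real.log (1 - x)) (-Real.log (1 - θ) - 1) θ := by
  have h0 : (1:ℝ) - θ ≠ 0 := ne_of_gt (by linarith)
  have hsub : HasDerivAt (fun x : ℝ => 1 - x) (-1) θ := by
    simpa using (hasDerivAt_id θ).const_sub 1
  have := hsub.mul (hasDerivAt_log1m h1)
  refine this.congr_deriv (Eq.symm ?_)
  field_simp
  ring

lemma hasDerivAt_DD {θ : ℝ} (h1 : θ < 1) :
    HasDerivAt DD (-Real.log (1 - θ)) θ := by
  have := (hasDerivAt_id θ).add (hasDerivAt_mullog h1)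
  refine this.congr_deriv (Eq.symm ?_)
  ring

lemma DD_mono : StrictMonoOn DD (Icc (0:ℝ) 1) := by
  apply strictMonoOn_of_deriv_pos (convex_Icc 0 1) contDD.continuousOn
  intro x hx
  rw [interior_Icc] at hx
  rw [(hasDerivAt_DD hx.2).deriv]
  have : Real.log (1 - x) < 0 := Real.log_neg (by linarith [hx.2]) (by linarith [hx.1])
  linarith

lemma DD_zero : DD 0 = 0 := by simp [DD]

lemma DD_pos {θ : ℝ} (h0 : 0 < θ) (h1 : θ ≤ 1) : 0 < DD θ := by
  have := DD_mono (left_mem_Icc.2 (by norm_num)) ⟨le_of_lt h0, h1⟩ h0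
  rwa [DD_zero] at this

lemma h_anti : StrictAntiOn h (Icc (0:ℝ) 1) := by
  intro a ha b hb hab
  rw [h_eq, h_eq]
  have := DD_mono ha hb hab
  linarith

lemma h_zero : h 0 = 1 := by simp [h]

lemma h_one : h 1 = 0 := by simp [h]

lemma hasDerivAt_I {n : ℕ} {θ : ℝ} (h1 : θ < 1) :
    HasDerivAt (I n) ((1 - n) * Real.log (1 - θ) - θ / (1 - θ)) θ := by
  have hmul : HasDerivAt (fun x => x * Real.log (1 - x))
      (Real.log (1 - θ) + θ * (-(1 - θ)⁻¹)) θ := by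
    exact ((hasDerivAt_id θ).mul (hasDerivAt_log1m h1)).congr_deriv (by simp)
  have hD : HasDerivAt (fun x => (n:ℝ) * (x + (1 - x) * Real.log (1 - x)))
      ((n:ℝ) * (-Real.log (1 - θ))) θ := (hasDerivAt_DD h1).const_mul _
  have := hmul.add hD
  have h0 : (1:ℝ) - θ ≠ 0 := ne_of_gt (by linarith)
  refine this.congr_deriv (Eq.symm ?_)
  field_simp
  ring

lemma I_zero (n : ℕ) : I n 0 = 0 := by simp [I]

lemma contI_at {n : ℕ} {θ : ℝ} (h1 : θ < 1) : ContinuousAt (I n) θ :=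
  (hasDerivAt_I h1).continuousAt

lemma I_mono (n : ℕ) (hn : 3 ≤ n) : StrictMonoOn (I n) (Icc (0:ℝ) (1/4)) := by
  apply strictMonoOn_of_deriv_pos (convex_Icc _ _)
  · exact fun x hx => (contI_at (by linarith [hx.2] : x < 1)).continuousWithinAt
  · intro x hx
    rw [interior_Icc] at hx
    obtain ⟨hx0, hx4⟩ := hx
    have h1 : x < 1 := by linarith
    rw [(hasDerivAt_I h1).deriv]
    have hL : Real.log (1 - x) ≤ -x := by
      have := Real.log_le_sub_one_of_pos (show (0:ℝ) < 1 - x by linarith)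
      linarith
    have hn' : (3:ℝ) ≤ (n:ℝ) := by exact_mod_cast hn
    have hfrac : x / (1 - x) ≤ (4/3) * x := by
      rw [div_le_iff₀ (by linarith)]
      nlinarith
    have hmul : (2:ℝ) * x ≤ ((n:ℝ) - 1) * (-Real.log (1 - x)) := by
      have hnL : 0 ≤ -Real.log (1 - x) := by linarith
      nlinarith
    have : (1 - (n:ℝ)) * Real.log (1 - x) = ((n:ℝ) - 1) * (-Real.log (1 - x)) := by ring
    rw [this]
    nlinarith

lemma I_pos_small {n : ℕ} (hn : 3 ≤ n) {θ : ℝ} (h0 : 0 < θ) (h4 : θ ≤ 1/4) :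
    0 < I n θ := by
  have := I_mono n hn (left_mem_Icc.2 (by norm_num)) ⟨le_of_lt h0, h4⟩ h0
  rwa [I_zero] at this

lemma I_neg_big {n : ℕ} (hn : 3 ≤ n) {θ : ℝ} (hb : 1 - Real.exp (-(2*n)) < θ)
    (h1 : θ < 1) : I n θ < 0 := by
  have hθpos : 0 < 1 - θ := by linarith
  have hLlt : Real.log (1 - θ) < -(2*n) := by
    have : Real.log (1 - θ) < Real.log (Real.exp (-(2*n))) :=
      Real.log_lt_log hθpos (by linarith)
    rwa [Real.log_exp] at this
  have hexp : Real.exp (-(2*(n:ℝ))) < 1/2 := by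
    have h6 : (6:ℝ) ≤ 2*(n:ℝ) := by
      have : (3:ℝ) ≤ (n:ℝ) := by exact_mod_cast hn
      linarith
    have : Real.exp (-(2*(n:ℝ))) ≤ Real.exp (-6) := Real.exp_le_exp.2 (by linarith)
    have h2 : Real.exp (-6) < 1/2 := by
      rw [Real.exp_neg]
      rw [inv_lt_comm₀ (Real.exp_pos 6) (by norm_num)]
      have := Real.add_one_le_exp (6:ℝ)
      linarith
    linarith
  have hθhalf : 1/2 < θ := by linarith
  have hLneg : Real.log (1 - θ) < 0 := by
    have : (0:ℝ) < 2*n := by positivity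
    linarith
  have hDle : DD θ ≤ θ := by
    have : (1 - θ) * Real.log (1 - θ) ≤ 0 :=
      mul_nonpos_of_nonneg_of_nonpos (by linarith) (le_of_lt hLneg)
    unfold DD; linarith
  have hθL : θ * Real.log (1 - θ) < -(n:ℝ) := by
    have h1' : θ * Real.log (1 - θ) < (1/2) * Real.log (1 - θ) := by
      apply mul_lt_mul_of_neg_right hθhalf hLneg
    have h2' : (1/2) * Real.log (1 - θ) < (1/2) * (-(2*(n:ℝ))) := by
      apply mul_lt_mul_of_pos_left hLlt (by norm_num)
    linarith
  have hnn : (0:ℝ) ≤ (n:ℝ) := Nat.cast_nonneg n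
  have : (n:ℝ) * (θ + (1-θ)*Real.log (1-θ)) ≤ (n:ℝ) := by
    have := mul_le_mul_of_nonneg_left (le_trans hDle (le_of_lt h1)) hnn
    simpa [DD] using this
  unfold I
  have hDDeq : θ + (1-θ)*Real.log (1-θ) = DD θ := rfl
  linarith

noncomputable def g (n : ℕ) (θ : ℝ) : ℝ := θ ^ n / DD θ

lemma hasDerivAt_g {n : ℕ} (hn : 1 ≤ n) {θ : ℝ} (h0 : 0 < θ) (h1 : θ < 1) :
    HasDerivAt (g n) (θ ^ (n-1) * I n θ / (DD θ)^2) θ := by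
  have hD : DD θ ≠ 0 := ne_of_gt (DD_pos h0 (le_of_lt h1))
  have := (hasDerivAt_pow n θ).div (hasDerivAt_DD h1) hD
  refine this.congr_deriv (Eq.symm ?_)
  have hpow : θ ^ (n-1) * θ = θ ^ n := by
    rw [← pow_succ]; congr 1; omega
  congr 1
  unfold I DD
  linear_combination Real.log (1 - θ) * hpow

lemma cont_g {n : ℕ} : ContinuousOn (g n) (Ioc (0:ℝ) 1) := by
  apply ContinuousOn.div (continuous_pow n).continuousOn contDD.continuousOn
  exact fun x hx => ne_of_gt (DD_pos hx.1 hx.2)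

lemma g_mono {n : ℕ} (hn : 1 ≤ n) {θs : ℝ} (hθs : θs ∈ Ioo (0:ℝ) 1)
    (Ipos : ∀ θ ∈ Ioo (0:ℝ) θs, 0 < I n θ) :
    StrictMonoOn (g n) (Ioc (0:ℝ) θs) := by
  apply strictMonoOn_of_deriv_pos (convex_Ioc _ _)
  · exact cont_g.mono (fun x hx => ⟨hx.1, le_trans hx.2 (le_of_lt hθs.2)⟩)
  · intro x hx
    rw [interior_Ioc] at hx
    have hx1 : x < 1 := lt_trans hx.2 hθs.2
    rw [(hasDerivAt_g hn hx.1 hx1).deriv]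
    have hI := Ipos x hx
    have hDp := DD_pos hx.1 (le_of_lt hx1)
    exact div_pos (mul_pos (pow_pos hx.1 _) hI) (by positivity)

lemma g_anti {n : ℕ} (hn : 1 ≤ n) {θs : ℝ} (hθs : θs ∈ Ioo (0:ℝ) 1)
    (Ineg : ∀ θ ∈ Ioo θs (1:ℝ), I n θ < 0) :
    StrictAntiOn (g n) (Icc θs 1) := by
  apply strictAntiOn_of_deriv_neg (convex_Icc _ _)
  · exact cont_g.mono (fun x hx => ⟨lt_of_lt_of_le hθs.1 hx.1, hx.2⟩)
  · intro x hx
    rw [interior_Icc] at hx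
    have hx0 : 0 < x := lt_trans hθs.1 hx.1
    rw [(hasDerivAt_g hn hx0 hx.2).deriv]
    have hI := Ineg x hx
    have hDp := DD_pos hx0 (le_of_lt hx.2)
    apply div_neg_of_neg_of_pos
    · exact mul_neg_of_pos_of_neg (pow_pos hx0 _) hI
    · positivity

lemma I_pos_of {n : ℕ} (hn : 3 ≤ n) {θstar : ℝ} (hθstar : θstar ∈ Ioo (0:ℝ) 1)
    (huniq : ∀ θ ∈ Ioo (0:ℝ) 1, I n θ = 0 → θ = θstar) :
    ∀ θ ∈ Ioo (0:ℝ) θstar, 0 < I n θ := by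
  rintro θ ⟨hθ0, hθs⟩
  by_contra hle
  push_neg at hle
  rcases lt_or_eq_of_le hle with hlt | heq
  · set θ₀ := min θ (1/4) / 2 with hθ₀def
    have hθ₀pos : 0 < θ₀ := by
      apply div_pos _ (by norm_num)
      exact lt_min hθ0 (by norm_num)
    have hθ₀lt : θ₀ < θ := by
      have h1 : min θ (1/4) ≤ θ := min_le_left _ _
      have h2 : 0 < min θ (1/4) := lt_min hθ0 (by norm_num)
      calc θ₀ < min θ (1/4) := by rw [hθ₀def]; linarith
        _ ≤ θ := h1
    have hθ₀4 : θ₀ ≤ 1/4 := by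
      have := min_le_right θ (1/4)
      rw [hθ₀def]; linarith
    have hI₀ : 0 < I n θ₀ := I_pos_small hn hθ₀pos hθ₀4
    have hθ1 : θ < 1 := lt_trans hθs hθstar.2
    have hcont : ContinuousOn (I n) (Icc θ₀ θ) := fun x hx =>
      (contI_at (lt_of_le_of_lt hx.2 hθ1)).continuousWithinAt
    have := intermediate_value_Ioo' (le_of_lt hθ₀lt) hcont
      (show (0:ℝ) ∈ Ioo (I n θ) (I n θ₀) from ⟨hlt, hI₀⟩)
    obtain ⟨c, hc, hceq⟩ := this
    have hc01 : c ∈ Ioo (0:ℝ) 1 := ⟨lt_trans hθ₀pos hc.1, lt_trans (lt_trans hc.2 hθs) hθstar.2⟩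
    have heq' := huniq c hc01 hceq
    have : c < θstar := lt_trans hc.2 hθs
    linarith
  · exact absurd (huniq θ ⟨hθ0, lt_trans hθs hθstar.2⟩ heq) (ne_of_lt hθs)

lemma I_neg_of {n : ℕ} (hn : 3 ≤ n) {θstar : ℝ} (hθstar : θstar ∈ Ioo (0:ℝ) 1)
    (huniq : ∀ θ ∈ Ioo (0:ℝ) 1, I n θ = 0 → θ = θstar) :
    ∀ θ ∈ Ioo θstar (1:ℝ), I n θ < 0 := by
  rintro θ ⟨hθs, hθ1⟩
  by_contra hle
  push_neg at hle
  rcases lt_or_eq_of_le hle with hlt | heq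
  · set M := max θ (1 - Real.exp (-(2*(n:ℝ)))) with hMdef
    have hM1 : M < 1 := by
      apply max_lt hθ1
      have := Real.exp_pos (-(2*(n:ℝ)))
      linarith
    set θ₁ := (M + 1) / 2 with hθ₁def
    have hθM : θ ≤ M := le_max_left _ _
    have hθ₁gtM : M < θ₁ := by rw [hθ₁def]; linarith
    have hθ₁lt1 : θ₁ < 1 := by rw [hθ₁def]; linarith
    have hθθ₁ : θ < θ₁ := lt_of_le_of_lt hθM hθ₁gtM
    have hI₁ : I n θ₁ < 0 := by
      apply I_neg_big hn _ hθ₁lt1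
      calc 1 - Real.exp (-(2*(n:ℝ))) ≤ M := le_max_right _ _
        _ < θ₁ := hθ₁gtM
    have hcont : ContinuousOn (I n) (Icc θ θ₁) := fun x hx =>
      (contI_at (lt_of_le_of_lt hx.2 hθ₁lt1)).continuousWithinAt
    have := intermediate_value_Ioo' (le_of_lt hθθ₁) hcont
      (show (0:ℝ) ∈ Ioo (I n θ₁) (I n θ) from ⟨hI₁, hlt⟩)
    obtain ⟨c, hc, hceq⟩ := this
    have hc01 : c ∈ Ioo (0:ℝ) 1 :=
      ⟨lt_trans (lt_trans hθstar.1 hθs) hc.1, lt_trans hc.2 hθ₁lt1⟩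
    have heq' := huniq c hc01 hceq
    have : θstar < c := lt_trans hθs hc.1
    linarith
  · exact absurd (huniq θ ⟨lt_trans hθstar.1 hθs, hθ1⟩ heq.symm) (ne_of_gt hθs)

/-- seller-worst reduced problem for `n ≥ 3` buyers.  With `θ*` the
unique zero of `I_n` in `(0,1)` and `pˢ = h(θ*)`: if `p ≤ pˢ` the maximum of
`(1−k)θⁿ` subject to `k + (1−k)h(θ) = p` is attained uniquely at `(0, h⁻¹(p))`;
if `p > pˢ` it is attained uniquely at `θ = θ*`, `k = (p−pˢ)/(1−pˢ) > 0`. -/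
theorem stmt2 (n : ℕ) (hn : 3 ≤ n) (p : ℝ) (hp : p ∈ Set.Ioo (0:ℝ) 1)
    (θstar : ℝ) (hθstar : θstar ∈ Set.Ioo (0:ℝ) 1)
    (hzero : I n θstar = 0)
    (huniq : ∀ θ ∈ Set.Ioo (0:ℝ) 1, I n θ = 0 → θ = θstar)
    (θp : ℝ) (hθp : θp ∈ Set.Icc (0:ℝ) 1) (hθph : h θp = p) :
    (p ≤ h θstar →
      ∀ k ∈ Set.Icc (0:ℝ) 1, ∀ θ ∈ Set.Icc (0:ℝ) 1,
        k + (1 - k) * h θ = p →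
        (1 - k) * θ ^ n ≤ (1 - 0) * θp ^ n ∧
        ((k, θ) ≠ (0, θp) → (1 - k) * θ ^ n < θp ^ n)) ∧
    (h θstar < p →
      0 < (p - h θstar) / (1 - h θstar) ∧
      ∀ k ∈ Set.Icc (0:ℝ) 1, ∀ θ ∈ Set.Icc (0:ℝ) 1,
        k + (1 - k) * h θ = p →
        (1 - k) * θ ^ n ≤ (1 - (p - h θstar) / (1 - h θstar)) * θstar ^ n ∧
        ((k, θ) ≠ ((p - h θstar) / (1 - h θstar), θstar) →
          (1 - k) * θ ^ n < (1 - (p - h θstar) / (1 - h θstar)) * θstar ^ n)) := by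
  obtain ⟨hp0, hp1⟩ := hp
  have hn1 : 1 ≤ n := by omega
  -- θp ∈ Ioo 0 1
  have hθp0 : 0 < θp := by
    rcases lt_or_eq_of_le hθp.1 with h | h
    · exact h
    · exfalso; rw [← h, h_zero] at hθph; linarith
  have hθp1 : θp < 1 := by
    rcases lt_or_eq_of_le hθp.2 with h | h
    · exact h
    · exfalso; rw [h, h_one] at hθph; linarith
  have hDθp : DD θp = 1 - p := by
    have := h_eq θp; rw [hθph] at this; linarith
  have Ipos := I_pos_of hn hθstar huniq
  have Ineg := I_neg_of hn hθstar huniq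
  have gmono := g_mono hn1 hθstar Ipos
  have ganti := g_anti hn1 hθstar Ineg
  have hDs : DD θstar = 1 - h θstar := by rw [h_eq]; ring
  have hDspos : 0 < DD θstar := DD_pos hθstar.1 (le_of_lt hθstar.2)
  -- feasibility facts
  have key : ∀ k ∈ Set.Icc (0:ℝ) 1, ∀ θ ∈ Set.Icc (0:ℝ) 1,
      k + (1 - k) * h θ = p →
      0 < θ ∧ (1 - k) * DD θ = 1 - p ∧ θp ≤ θ ∧
      (1 - k) * θ ^ n = (1 - p) * g n θ := by
    intro k hk θ hθ hcon
    have hθ0 : 0 < θ := by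
      rcases lt_or_eq_of_le hθ.1 with h | h
      · exact h
      · exfalso; rw [← h, h_zero] at hcon; linarith
    have hDθ : 0 < DD θ := DD_pos hθ0 hθ.2
    have hcon' : k + (1 - k) * (1 - DD θ) = p := by rw [← h_eq]; exact hcon
    have key2 : (1 - k) * DD θ = 1 - p := by linear_combination -hcon'
    have hθpθ : θp ≤ θ := by
      by_contra hlt
      push_neg at hlt
      have hmono := DD_mono hθ hθp hlt
      rw [hDθp] at hmono
      nlinarith [hk.1]
    refine ⟨hθ0, key2, hθpθ, ?_⟩
    unfold g
    field_simp
    linear_combination key2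
  constructor
  · -- case p ≤ h θstar
    intro hple k hk θ hθ hcon
    obtain ⟨hθ0, key2, hθpθ, hform⟩ := key k hk θ hθ hcon
    have hsθp : θstar ≤ θp := by
      by_contra hlt
      push_neg at hlt
      have := h_anti (Set.mem_Icc.2 ⟨le_of_lt hθp0, le_of_lt hθp1⟩)
        (Set.mem_Icc.2 ⟨le_of_lt hθstar.1, le_of_lt hθstar.2⟩) hlt
      rw [hθph] at this
      linarith
    have hθpmem : θp ∈ Set.Icc θstar 1 := ⟨hsθp, le_of_lt hθp1⟩
    have hθmem : θ ∈ Set.Icc θstar 1 := ⟨le_trans hsθp hθpθ, hθ.2⟩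
    have hvalp : (1 - p) * g n θp = θp ^ n := by
      have h1p : (1:ℝ) - p ≠ 0 := by linarith
      unfold g
      rw [hDθp]
      field_simp
    have hle : (1 - k) * θ ^ n ≤ θp ^ n := by
      rcases lt_or_eq_of_le hθpθ with hlt | heq
      · have := ganti hθpmem hθmem hlt
        rw [hform, ← hvalp]
        nlinarith
      · rw [hform, ← heq, hvalp]
    constructor
    · linarith [hle]
    · intro hne
      have hθne : θ ≠ θp := by
        intro heq
        apply hne
        rw [heq] at key2
        rw [hDθp] at key2
        have : k = 0 := by nlinarith
        rw [this, heq]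
      have hlt : θp < θ := lt_of_le_of_ne hθpθ (Ne.symm hθne)
      have := ganti hθpmem hθmem hlt
      rw [hform, ← hvalp]
      nlinarith
  · -- case h θstar < p
    intro hpgt
    have hkpos : 0 < (p - h θstar) / (1 - h θstar) := by
      apply div_pos (by linarith) (by linarith [hDs, hDspos])
    refine ⟨hkpos, ?_⟩
    intro k hk θ hθ hcon
    obtain ⟨hθ0, key2, hθpθ, hform⟩ := key k hk θ hθ hcon
    have hθps : θp < θstar := by
      by_contra hle
      push_neg at hle
      rcases lt_or_eq_of_le hle with hlt | heq
      · have := h_anti (Set.mem_Icc.2 ⟨le_of_lt hθstar.1, le_of_lt hθstar.2⟩)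
          (Set.mem_Icc.2 ⟨le_of_lt hθp0, le_of_lt hθp1⟩) hlt
        rw [hθph] at this
        linarith
      · rw [heq, hθph] at hpgt; exact lt_irrefl _ hpgt
    have h1ps : 0 < 1 - h θstar := by linarith [hDs, hDspos]
    have hval : (1 - (p - h θstar) / (1 - h θstar)) * θstar ^ n = (1 - p) * g n θstar := by
      have h1ps' : (1:ℝ) - h θstar ≠ 0 := ne_of_gt h1ps
      unfold g
      rw [hDs]
      field_simp
      ring
    have hgle : ∀ hne : θ ≠ θstar, g n θ < g n θstar := by
      intro hne
      rcases lt_or_gt_of_ne hne with hlt | hgt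
      · exact gmono ⟨hθ0, le_of_lt hlt⟩ ⟨hθstar.1, le_refl _⟩ hlt
      · exact ganti ⟨le_refl _, le_of_lt hθstar.2⟩ ⟨le_of_lt hgt, hθ.2⟩ hgt
    constructor
    · rcases eq_or_ne θ θstar with heq | hne
      · rw [hform, hval, heq]
      · have := hgle hne
        rw [hform, hval]
        nlinarith
    · intro hne
      have hθne : θ ≠ θstar := by
        intro heq
        apply hne
        rw [heq, hDs] at key2
        have hkk : k = (p - h θstar) / (1 - h θstar) := by
          field_simp
          linarith [key2]
        rw [hkk, heq]
      have := hgle hθne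
      rw [hform, hval]
      nlinarith
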